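/- Let d > 0 and r1, r2 > 0 with r1 + r2 < d. Then the equation cosh(x)/cosh(r1) = cosh(d - x)/cosh(r2) has exactly one solution x in the real line, and this solution satisfies r1 < x < d - r2. -/

import Mathlib

/-- Existence and uniqueness of the equipotential point between two disjoint
circles in the hyperbolic plane whose centers are at distance `d`, with radii
`r1` and `r2`; the unique solution lies strictly between the circles. -/
theorem existsUnique_hyperbolic_equipotential
    (d r1 r2 : ℝ) (hd : 0 < d) (hr1 : 0 < r1) (hr2 : 0 < r2)
    (hdisj : r1 + r2 < d) :
    (∃! x : ℝ, Real.cosh x / Real.cosh r1 = Real.cosh (d - x) / Real.cosh r2) ∧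
    ∀ x : ℝ, Real.cosh x / Real.cosh r1 = Real.cosh (d - x) / Real.cosh r2 →
      x ∈ Set.Ioo r1 (d - r2) := by
  have hc1 : (0:ℝ) < Real.cosh r1 := Real.cosh_pos r1
  have hc2 : (0:ℝ) < Real.cosh r2 := Real.cosh_pos r2
  set c1 := Real.cosh r1 with hc1def
  set c2 := Real.cosh r2 with hc2def
  set f : ℝ → ℝ := fun x => Real.cosh x / c1 - Real.cosh (d - x) / c2 with hf
  -- derivative
  have hderiv : ∀ x, HasDerivAt f (Real.sinh x / c1 + Real.sinh (d - x) / c2) x := by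
    intro x
    have h2 : HasDerivAt (fun y : ℝ => d - y) (-1) x := by
      simpa using (hasDerivAt_id x).const_sub d
    have h3 : HasDerivAt (fun y => Real.cosh (d - y)) (Real.sinh (d - x) * (-1)) x :=
      (Real.hasDerivAt_cosh (d - x)).comp x h2
    have h := ((Real.hasDerivAt_cosh x).div_const c1).sub (h3.div_const c2)
    exact h.congr_deriv (by ring)
  -- key inequalities on radii
  have hexp1 : Real.exp (-d) * c1 < c2 := by
    have e1 : Real.exp (r1 - d) < 1 := Real.exp_lt_one_iff.2 (by linarith)
    have e2 : Real.exp (-r1 - d) < 1 := Real.exp_lt_one_iff.2 (by linarith)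
    have hc : Real.exp (-d) * c1 = (Real.exp (r1 - d) + Real.exp (-r1 - d)) / 2 := by
      rw [hc1def, Real.cosh_eq, show r1 - d = r1 + -d by ring, show -r1 - d = -r1 + -d by ring,
        Real.exp_add, Real.exp_add]
      ring
    rw [hc]
    have := Real.one_le_cosh r2
    linarith
  have hexp2 : c2 < Real.exp d * c1 := by
    have e1 : Real.exp r2 < Real.exp d := Real.exp_lt_exp.2 (by linarith)
    have e2 : Real.exp (-r2) < 1 := Real.exp_lt_one_iff.2 (by linarith)
    have e3 : (1:ℝ) < Real.exp d := by rw [Real.one_lt_exp_iff]; exact hd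
    have hcc : c2 = (Real.exp r2 + Real.exp (-r2)) / 2 := Real.cosh_eq r2
    have h1 : (1:ℝ) ≤ c1 := Real.one_le_cosh r1
    nlinarith [Real.exp_pos d]
  have hsd : 0 < Real.sinh d := by have h := Real.sinh_lt_sinh.2 hd; rwa [Real.sinh_zero] at h
  have hbound : |c2 - Real.cosh d * c1| < Real.sinh d * c1 := by
    rw [abs_lt]
    have h1 : Real.cosh d - Real.sinh d = Real.exp (-d) := Real.cosh_sub_sinh d
    have h2 : Real.cosh d + Real.sinh d = Real.exp d := Real.cosh_add_sinh d
    constructor <;> nlinarith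
  -- derivative positivity
  have hE : ∀ x, 0 < Real.sinh x / c1 + Real.sinh (d - x) / c2 := by
    intro x
    have hsabs : |Real.sinh x| < Real.cosh x := by
      have h1 : Real.cosh x - Real.sinh x = Real.exp (-x) := Real.cosh_sub_sinh x
      have h2 : Real.cosh x + Real.sinh x = Real.exp x := Real.cosh_add_sinh x
      rw [abs_lt]
      constructor <;> nlinarith [Real.exp_pos x, Real.exp_pos (-x)]
    have key : 0 < Real.sinh x * c2 + Real.sinh (d - x) * c1 := by
      have expand : Real.sinh (d - x)
          = Real.sinh d * Real.cosh x - Real.cosh d * Real.sinh x := by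
        rw [Real.sinh_sub]
      rw [expand]
      have habs2 : |Real.sinh x * (c2 - Real.cosh d * c1)| < Real.cosh x * (Real.sinh d * c1) := by
        rw [abs_mul]
        exact mul_lt_mul'' hsabs hbound (abs_nonneg _) (abs_nonneg _)
      have hneg := neg_abs_le (Real.sinh x * (c2 - Real.cosh d * c1))
      nlinarith
    have heqd : Real.sinh x / c1 + Real.sinh (d - x) / c2
        = (Real.sinh x * c2 + Real.sinh (d - x) * c1) / (c1 * c2) := by
      field_simp
    rw [heqd]
    exact div_pos key (mul_pos hc1 hc2)
  have hmono : StrictMono f := by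
    apply strictMono_of_deriv_pos
    intro x
    rw [(hderiv x).deriv]
    exact hE x
  have hcont : Continuous f := by
    have : Differentiable ℝ f := fun x => (hderiv x).differentiableAt
    exact this.continuous
  have hlt : r1 < d - r2 := by linarith
  have hf1 : f r1 < 0 := by
    have h : c2 < Real.cosh (d - r1) := by
      rw [hc2def, Real.cosh_lt_cosh, abs_of_pos hr2, abs_of_pos (by linarith : (0:ℝ) < d - r1)]
      linarith
    have : (1:ℝ) < Real.cosh (d - r1) / c2 := (one_lt_div hc2).2 h
    simp only [hf]
    rw [div_self hc1.ne']
    linarith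
  have hf2 : 0 < f (d - r2) := by
    have h : c1 < Real.cosh (d - r2) := by
      rw [hc1def, Real.cosh_lt_cosh, abs_of_pos hr1, abs_of_pos (by linarith : (0:ℝ) < d - r2)]
      linarith
    have : (1:ℝ) < Real.cosh (d - r2) / c1 := (one_lt_div hc1).2 h
    simp only [hf]
    rw [show d - (d - r2) = r2 by ring, div_self hc2.ne']
    linarith
  obtain ⟨x0, hx0mem, hx0⟩ : ∃ x ∈ Set.Ioo r1 (d - r2), f x = 0 := by
    have h0 : (0:ℝ) ∈ Set.Ioo (f r1) (f (d - r2)) := ⟨hf1, hf2⟩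
    obtain ⟨x, hx, hfx⟩ := intermediate_value_Ioo hlt.le hcont.continuousOn h0
    exact ⟨x, hx, hfx⟩
  have heq : ∀ x : ℝ, (Real.cosh x / c1 = Real.cosh (d - x) / c2) ↔ f x = 0 := by
    intro x
    simp only [hf]
    rw [sub_eq_zero]
  have huniq : ∀ x : ℝ, Real.cosh x / c1 = Real.cosh (d - x) / c2 → x = x0 := by
    intro x hx
    exact hmono.injective (((heq x).1 hx).trans hx0.symm)
  constructor
  · exact ⟨x0, (heq x0).2 hx0, huniq⟩
  · intro x hx
    rw [huniq x hx]
    exact hx0mem
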